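/- For all integers n and k with 0 ≤ k ≤ n, Σ_{π ∈ OP(n,k)} q^{ROS(π)} = [k]!·S_q[n,k]. -/

import Mathlib

/-- The indeterminate `q`, as an element of the field of rational functions over `ℚ`. -/
noncomputable def qq : RatFunc ℚ := RatFunc.X

/-- The q-integer `[m] = 1 + q + ⋯ + q^(m-1)`. -/
noncomputable def qint (m : ℕ) : RatFunc ℚ := ∑ j ∈ Finset.range m, qq ^ j

/-- The q-factorial `[m]! = [m][m-1]⋯[1]`, with `[0]! = 1`. -/
noncomputable def qfac : ℕ → RatFunc ℚ
  | 0 => 1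
  | m + 1 => qint (m + 1) * qfac m

/-- The Gaussian binomial coefficient `[a]!/([b]!·[a-b]!)` (zero if `b > a`). -/
noncomputable def qbinom (a b : ℕ) : RatFunc ℚ :=
  if b ≤ a then qfac a / (qfac b * qfac (a - b)) else 0

/-- The q-Stirling number of the second kind. -/
noncomputable def qStirling (n k : ℕ) : RatFunc ℚ :=
  if k ≤ n then
    (∑ i ∈ Finset.range (k + 1),
      (-1 : RatFunc ℚ) ^ i * qbinom k i * qq ^ Nat.choose i 2 * qint (k - i) ^ n) / qfac k
  else 0

/-- Ordered partitions of `{1,…,n}` (encoded as `Fin n`) into `k` blocks: sequences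
`(B_1,…,B_k)` of pairwise disjoint nonempty subsets whose union is everything, i.e.
every letter lies in exactly one block. -/
def OP (n k : ℕ) : Finset (Fin k → Finset (Fin n)) :=
  Finset.univ.filter fun B =>
    (∀ j, (B j).Nonempty) ∧ ∀ x : Fin n, ∃ j, x ∈ B j ∧ ∀ j', x ∈ B j' → j' = j

/-- `ros(π)`: the number of pairs `(i,j)` of letters with `j < i`, `j` the opener
(least element) of its block, and the block of `j` strictly to the right of the
block of `i`. -/
def ros {n k : ℕ} (B : Fin k → Finset (Fin n)) : ℕ :=
  ((Finset.univ : Finset (Fin n × Fin n)).filter fun ij =>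
    ij.2 < ij.1 ∧ ∃ a b : Fin k, ij.1 ∈ B a ∧ ij.2 ∈ B b ∧ (B b).min = ↑ij.2 ∧ a < b).card

/-- `rcb(π)`: pairs `(i,j)` with `j > i`, `j` the closer (greatest element) of its block,
and the block of `j` strictly to the right of the block of `i`. -/
def rcb {n k : ℕ} (B : Fin k → Finset (Fin n)) : ℕ :=
  ((Finset.univ : Finset (Fin n × Fin n)).filter fun ij =>
    ij.1 < ij.2 ∧ ∃ a b : Fin k, ij.1 ∈ B a ∧ ij.2 ∈ B b ∧ (B b).max = ↑ij.2 ∧ a < b).card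

/-- `los(π)`: pairs `(i,j)` with `j < i`, `j` the opener of its block, and the block of
`j` strictly to the left of the block of `i`. -/
def los {n k : ℕ} (B : Fin k → Finset (Fin n)) : ℕ :=
  ((Finset.univ : Finset (Fin n × Fin n)).filter fun ij =>
    ij.2 < ij.1 ∧ ∃ a b : Fin k, ij.1 ∈ B a ∧ ij.2 ∈ B b ∧ (B b).min = ↑ij.2 ∧ b < a).card

/-- `lcb(π)`: pairs `(i,j)` with `j > i`, `j` the closer of its block, and the block of
`j` strictly to the left of the block of `i`. -/
def lcb {n k : ℕ} (B : Fin k → Finset (Fin n)) : ℕ :=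
  ((Finset.univ : Finset (Fin n × Fin n)).filter fun ij =>
    ij.1 < ij.2 ∧ ∃ a b : Fin k, ij.1 ∈ B a ∧ ij.2 ∈ B b ∧ (B b).max = ↑ij.2 ∧ b < a).card

/-- `ROS = ros + C(k,2)` is Euler-Mahonian on ordered partitions:
`∑_{π ∈ OP(n,k)} q^(ROS π) = [k]!·S_q[n,k]` for `0 ≤ k ≤ n`. -/
lemma qint_eq_map (m : ℕ) : qint m = algebraMap (Polynomial ℚ) (RatFunc ℚ)
    (∑ j ∈ Finset.range m, Polynomial.X ^ j) := by
  simp [qint, qq, map_sum, map_pow, RatFunc.algebraMap_X]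

lemma qint_ne_zero {m : ℕ} (h : m ≠ 0) : qint m ≠ 0 := by
  rw [qint_eq_map]
  intro hc
  have h0 : (∑ j ∈ Finset.range m, (Polynomial.X : Polynomial ℚ) ^ j) = 0 := by
    apply RatFunc.algebraMap_injective ℚ
    simpa using hc
  have := congrArg (Polynomial.eval 1) h0
  simp [Polynomial.eval_finset_sum] at this
  exact h this

lemma qfac_ne_zero (m : ℕ) : qfac m ≠ 0 := by
  induction m with
  | zero => simp [qfac]
  | succ m ih => exact mul_ne_zero (qint_ne_zero (Nat.succ_ne_zero m)) ih

lemma qint_add (a b : ℕ) : qint (a + b) = qint a + qq ^ a * qint b := by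
  induction b with
  | zero => simp [qint]
  | succ b ih =>
    have h1 : qint (b+1) = qint b + qq ^ b := by
      rw [qint, Finset.sum_range_succ, ← qint]
    have h2 : qint (a+b+1) = qint (a+b) + qq ^ (a+b) := by
      rw [qint, Finset.sum_range_succ, ← qint]
    rw [show a + (b+1) = (a+b)+1 from rfl, h2, ih, h1, pow_add]
    ring

lemma qbinom_zero (a : ℕ) : qbinom a 0 = 1 := by
  simp [qbinom, qfac]
  exact qfac_ne_zero a

lemma qbinom_self (a : ℕ) : qbinom a a = 1 := by
  simp [qbinom, qfac]
  exact qfac_ne_zero a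

lemma qbinom_of_gt {a b : ℕ} (h : a < b) : qbinom a b = 0 := by
  simp [qbinom, Nat.not_le.mpr h]

lemma qbinom_pascal (k i : ℕ) (h : i ≤ k) :
    qbinom (k+1) (i+1) = qq ^ (i+1) * qbinom k (i+1) + qbinom k i := by
  rcases eq_or_lt_of_le h with rfl | hlt
  · rw [qbinom_self, qbinom_self, qbinom_of_gt (Nat.lt_succ_self i)]
    ring
  · obtain ⟨d, rfl⟩ : ∃ d, k = i + 1 + d := ⟨k - (i+1), by omega⟩
    rw [qbinom, qbinom, qbinom, if_pos (by omega), if_pos (by omega), if_pos (by omega)]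
    have e1 : i + 1 + d + 1 - (i + 1) = d + 1 := by omega
    have e2 : i + 1 + d - (i + 1) = d := by omega
    have e3 : i + 1 + d - i = d + 1 := by omega
    rw [e1, e2, e3]
    have hq1 : qfac (i + 1 + d + 1) = qint (i + 1 + d + 1) * qfac (i + 1 + d) := rfl
    have hq2 : qfac (d + 1) = qint (d + 1) * qfac d := rfl
    have hq3 : qfac (i + 1) = qint (i + 1) * qfac i := rfl
    have hsplit : qint (i + 1 + d + 1) = qint (i+1) + qq ^ (i+1) * qint (d+1) := by
      rw [show i + 1 + d + 1 = (i+1) + (d+1) from rfl, qint_add]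
    rw [hq1, hq2, hq3, hsplit]
    have n1 := qfac_ne_zero i
    have n2 := qfac_ne_zero d
    have n3 := qfac_ne_zero (i + 1 + d)
    have n4 := qint_ne_zero (show d + 1 ≠ 0 by omega)
    have n5 := qint_ne_zero (show i + 1 ≠ 0 by omega)
    field_simp
    ring

noncomputable def Fq (n k : ℕ) : RatFunc ℚ :=
  ∑ i ∈ Finset.range (k+1),
    (-1 : RatFunc ℚ) ^ i * qbinom k i * qq ^ Nat.choose i 2 * qint (k - i) ^ n

lemma qStirling_eq {n k : ℕ} (h : k ≤ n) : qfac k * qStirling n k = Fq n k := by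
  rw [qStirling, if_pos h, Fq, mul_comm, div_mul_cancel₀ _ (qfac_ne_zero k)]

lemma Fq_zero_right (n : ℕ) : Fq n 0 = if n = 0 then 1 else 0 := by
  rcases n with _ | n <;> simp [Fq, qbinom_zero, qint]

lemma choose_succ_two (j : ℕ) : (j+1).choose 2 = j.choose 2 + j := by
  rw [Nat.choose_succ_succ]
  simp [Nat.choose_one_right, Nat.add_comm]

lemma Fq_zero_left (k : ℕ) : Fq 0 (k+1) = 0 := by
  have h : Fq 0 (k+1) = ∑ i ∈ Finset.range (k+2),
      (-1 : RatFunc ℚ) ^ i * qbinom (k+1) i * qq ^ Nat.choose i 2 := by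
    simp [Fq]
  rw [h, Finset.sum_range_succ']
  have hterm : ∀ j ∈ Finset.range (k+1),
      (-1 : RatFunc ℚ) ^ (j+1) * qbinom (k+1) (j+1) * qq ^ Nat.choose (j+1) 2 =
      (fun i => (-1 : RatFunc ℚ) ^ i * qq ^ (Nat.choose i 2 + i) * qbinom k i) (j+1)
      - (fun i => (-1 : RatFunc ℚ) ^ i * qq ^ (Nat.choose i 2 + i) * qbinom k i) j := by
    intro j hj
    rw [Finset.mem_range] at hj
    dsimp only
    rw [qbinom_pascal k j (by omega), choose_succ_two]
    simp only [pow_add, pow_succ]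
    ring
  rw [Finset.sum_congr rfl hterm, Finset.sum_range_sub
    (fun i => (-1 : RatFunc ℚ) ^ i * qq ^ (Nat.choose i 2 + i) * qbinom k i)]
  rw [qbinom_of_gt (Nat.lt_succ_self k)]
  simp [qbinom_zero]

lemma qbinom_mul_qint (k j : ℕ) (h : j ≤ k) :
    qint (j+1) * qbinom (k+1) (j+1) = qint (k+1) * qbinom k j := by
  obtain ⟨d, rfl⟩ : ∃ d, k = j + d := ⟨k - j, by omega⟩
  rw [qbinom, qbinom, if_pos (by omega), if_pos (by omega)]
  have e1 : j + d + 1 - (j + 1) = d := by omega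
  have e2 : j + d - j = d := by omega
  rw [e1, e2]
  have hq1 : qfac (j + d + 1) = qint (j + d + 1) * qfac (j + d) := rfl
  have hq3 : qfac (j + 1) = qint (j + 1) * qfac j := rfl
  rw [hq1, hq3]
  have n1 := qfac_ne_zero j
  have n2 := qfac_ne_zero d
  have n3 := qfac_ne_zero (j + d)
  have n5 := qint_ne_zero (show j + 1 ≠ 0 by omega)
  field_simp

lemma Fq_rec (n k : ℕ) :
    Fq (n+1) (k+1) = qint (k+1) * Fq n (k+1) + qq ^ k * qint (k+1) * Fq n k := by
  have key : ∀ i ∈ Finset.range (k+2),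
      (-1 : RatFunc ℚ) ^ i * qbinom (k+1) i * qq ^ Nat.choose i 2 * qint (k+1-i) ^ (n+1) =
      qint (k+1) * ((-1 : RatFunc ℚ) ^ i * qbinom (k+1) i * qq ^ Nat.choose i 2 * qint (k+1-i) ^ n)
      - (-1 : RatFunc ℚ) ^ i * qbinom (k+1) i * qq ^ Nat.choose i 2 * qq ^ (k+1-i) * qint i
          * qint (k+1-i) ^ n := by
    intro i hi
    rw [Finset.mem_range] at hi
    have hsplit : qint (k+1) = qint (k+1-i) + qq ^ (k+1-i) * qint i := by
      rw [← qint_add]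
      congr 1
      omega
    rw [hsplit, pow_succ]
    ring
  rw [Fq, Finset.sum_congr rfl key, Finset.sum_sub_distrib, ← Finset.mul_sum, ← Fq]
  rw [Finset.sum_range_succ']
  have h0 : (-1 : RatFunc ℚ) ^ 0 * qbinom (k+1) 0 * qq ^ Nat.choose 0 2 * qq ^ (k+1-0) * qint 0
      * qint (k+1-0) ^ n = 0 := by
    simp [qint]
  rw [h0, add_zero]
  have hterm : ∀ j ∈ Finset.range (k+1),
      (-1 : RatFunc ℚ) ^ (j+1) * qbinom (k+1) (j+1) * qq ^ Nat.choose (j+1) 2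
        * qq ^ (k+1-(j+1)) * qint (j+1) * qint (k+1-(j+1)) ^ n =
      -(qq ^ k * qint (k+1) *
        ((-1 : RatFunc ℚ) ^ j * qbinom k j * qq ^ Nat.choose j 2 * qint (k - j) ^ n)) := by
    intro j hj
    rw [Finset.mem_range] at hj
    have e1 : k + 1 - (j+1) = k - j := by omega
    rw [e1, choose_succ_two]
    have hb := qbinom_mul_qint k j (by omega)
    have e2 : qq ^ (Nat.choose j 2 + j) * qq ^ (k - j) = qq ^ Nat.choose j 2 * qq ^ k := by
      rw [← pow_add, ← pow_add]
      congr 1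
      omega
    calc (-1 : RatFunc ℚ) ^ (j+1) * qbinom (k+1) (j+1) * qq ^ (Nat.choose j 2 + j)
          * qq ^ (k-j) * qint (j+1) * qint (k-j) ^ n
        = -((-1 : RatFunc ℚ) ^ j * (qint (j+1) * qbinom (k+1) (j+1)) *
            (qq ^ (Nat.choose j 2 + j) * qq ^ (k-j)) * qint (k-j) ^ n) := by ring
      _ = _ := by rw [hb, e2]; ring
  rw [Finset.sum_congr rfl hterm, Finset.sum_neg_distrib, ← Finset.mul_sum, ← Fq]
  ring

lemma mem_OP {n k : ℕ} {B : Fin k → Finset (Fin n)} :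
    B ∈ OP n k ↔ (∀ j, (B j).Nonempty) ∧
      ∀ x : Fin n, ∃ j, x ∈ B j ∧ ∀ j', x ∈ B j' → j' = j := by
  unfold OP
  rw [Finset.mem_filter]
  exact and_iff_right (Finset.mem_univ _)

lemma min_eq_coe_iff {α : Type*} [LinearOrder α] (S : Finset α) (j : α) :
    S.min = (j : WithTop α) ↔ j ∈ S ∧ ∀ y ∈ S, j ≤ y := by
  constructor
  · intro h
    refine ⟨Finset.mem_of_min h, fun y hy => ?_⟩
    have h2 := Finset.min_le hy
    rw [h] at h2
    exact_mod_cast h2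
  · rintro ⟨h1, h2⟩
    exact le_antisymm (Finset.min_le h1)
      (Finset.le_min fun y hy => by exact_mod_cast h2 y hy)

/-- map a finset of `Fin n` into `Fin (n+1)` via `castSucc`. -/
def mS {n : ℕ} (S : Finset (Fin n)) : Finset (Fin (n+1)) := S.map Fin.castSuccEmb

lemma mem_mS {n : ℕ} {S : Finset (Fin n)} {x : Fin (n+1)} :
    x ∈ mS S ↔ ∃ y, y ∈ S ∧ Fin.castSucc y = x := by
  simp only [mS, Finset.mem_map]
  rfl

lemma mem_mS_castSucc {n : ℕ} {S : Finset (Fin n)} {y : Fin n} :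
    Fin.castSucc y ∈ mS S ↔ y ∈ S := by
  rw [mem_mS]
  constructor
  · rintro ⟨z, hz, hzy⟩
    rwa [← Fin.castSucc_injective n hzy]
  · intro h
    exact ⟨y, h, rfl⟩

lemma last_not_mem_mS {n : ℕ} {S : Finset (Fin n)} : Fin.last n ∉ mS S := by
  rw [mem_mS]
  rintro ⟨y, _, hy⟩
  exact (Fin.castSucc_lt_last y).ne hy

lemma mS_min {n : ℕ} {S : Finset (Fin n)} {y : Fin n} :
    (mS S).min = ↑(Fin.castSucc y) ↔ S.min = ↑y := by
  rw [min_eq_coe_iff, min_eq_coe_iff, mem_mS_castSucc]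
  constructor
  · rintro ⟨h1, h2⟩
    exact ⟨h1, fun w hw => Fin.castSucc_le_castSucc_iff.mp
      (h2 _ (mem_mS_castSucc.mpr hw))⟩
  · rintro ⟨h1, h2⟩
    refine ⟨h1, fun z hz => ?_⟩
    obtain ⟨w, hw, rfl⟩ := mem_mS.mp hz
    exact Fin.castSucc_le_castSucc_iff.mpr (h2 w hw)

lemma insert_last_min {n : ℕ} {S : Finset (Fin n)} {y : Fin n} :
    (insert (Fin.last n) (mS S)).min = ↑(Fin.castSucc y) ↔ S.min = ↑y := by
  rw [min_eq_coe_iff, min_eq_coe_iff, Finset.mem_insert, mem_mS_castSucc]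
  constructor
  · rintro ⟨h1, h2⟩
    rcases h1 with h1 | h1
    · exact absurd h1 (Fin.castSucc_lt_last y).ne
    · exact ⟨h1, fun w hw => Fin.castSucc_le_castSucc_iff.mp
        (h2 _ (Finset.mem_insert_of_mem (mem_mS_castSucc.mpr hw)))⟩
  · rintro ⟨h1, h2⟩
    refine ⟨Or.inr h1, fun z hz => ?_⟩
    rcases Finset.mem_insert.mp hz with rfl | hz
    · exact (Fin.castSucc_lt_last y).le
    · obtain ⟨w, hw, rfl⟩ := mem_mS.mp hz
      exact Fin.castSucc_le_castSucc_iff.mpr (h2 w hw)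

/-- delete : preimage under castSucc. -/
noncomputable def delS {n : ℕ} (S : Finset (Fin (n+1))) : Finset (Fin n) :=
  S.preimage Fin.castSucc (Fin.castSucc_injective n).injOn

lemma mem_delS {n : ℕ} {S : Finset (Fin (n+1))} {y : Fin n} :
    y ∈ delS S ↔ Fin.castSucc y ∈ S := Finset.mem_preimage

lemma delS_mS {n : ℕ} (S : Finset (Fin n)) : delS (mS S) = S := by
  ext y
  rw [mem_delS, mem_mS_castSucc]

lemma mS_delS {n : ℕ} {S : Finset (Fin (n+1))} (h : Fin.last n ∉ S) : mS (delS S) = S := by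
  ext x
  rw [mem_mS]
  constructor
  · rintro ⟨y, hy, rfl⟩
    exact mem_delS.mp hy
  · intro hx
    have hxl : x ≠ Fin.last n := fun hc => h (hc ▸ hx)
    obtain ⟨y, rfl⟩ := Fin.exists_castSucc_eq.mpr hxl
    exact ⟨y, mem_delS.mpr hx, rfl⟩

/-! ### insertion maps -/

def ins2 {n k : ℕ} (a : Fin (k+1)) (B : Fin (k+1) → Finset (Fin n)) :
    Fin (k+1) → Finset (Fin (n+1)) :=
  fun j => if j = a then insert (Fin.last n) (mS (B j)) else mS (B j)

def ins1 {n k : ℕ} (a : Fin (k+1)) (B : Fin k → Finset (Fin n)) :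
    Fin (k+1) → Finset (Fin (n+1)) :=
  a.insertNth ({Fin.last n} : Finset (Fin (n+1))) (fun i => mS (B i))

lemma ins1_apply_same {n k : ℕ} (a : Fin (k+1)) (B : Fin k → Finset (Fin n)) :
    ins1 a B a = {Fin.last n} := Fin.insertNth_apply_same a _ _

lemma ins1_apply_succAbove {n k : ℕ} (a : Fin (k+1)) (B : Fin k → Finset (Fin n)) (i : Fin k) :
    ins1 a B (a.succAbove i) = mS (B i) := Fin.insertNth_apply_succAbove a _ _ i

lemma ins2_last_mem {n k : ℕ} {a : Fin (k+1)} {B : Fin (k+1) → Finset (Fin n)} {j : Fin (k+1)} :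
    Fin.last n ∈ ins2 a B j ↔ j = a := by
  unfold ins2
  split_ifs with h
  · simp [h]
  · simp [h, last_not_mem_mS]

lemma ins2_castSucc_mem {n k : ℕ} {a : Fin (k+1)} {B : Fin (k+1) → Finset (Fin n)}
    {j : Fin (k+1)} {y : Fin n} : Fin.castSucc y ∈ ins2 a B j ↔ y ∈ B j := by
  unfold ins2
  split_ifs with h
  · rw [Finset.mem_insert, mem_mS_castSucc]
    simp [(Fin.castSucc_lt_last y).ne]
  · exact mem_mS_castSucc

lemma ins2_min {n k : ℕ} {a : Fin (k+1)} {B : Fin (k+1) → Finset (Fin n)}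
    {j : Fin (k+1)} {y : Fin n} :
    (ins2 a B j).min = ↑(Fin.castSucc y) ↔ (B j).min = ↑y := by
  unfold ins2
  split_ifs with h
  · exact insert_last_min
  · exact mS_min

lemma ins1_last_mem {n k : ℕ} {a : Fin (k+1)} {B : Fin k → Finset (Fin n)} {j : Fin (k+1)} :
    Fin.last n ∈ ins1 a B j ↔ j = a := by
  rcases eq_or_ne j a with rfl | hne
  · simp [ins1_apply_same]
  · obtain ⟨i, rfl⟩ := Fin.exists_succAbove_eq hne
    rw [ins1_apply_succAbove]
    simp [last_not_mem_mS, Fin.succAbove_ne a i]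

lemma ins1_castSucc_mem {n k : ℕ} {a : Fin (k+1)} {B : Fin k → Finset (Fin n)}
    {j : Fin (k+1)} {y : Fin n} :
    Fin.castSucc y ∈ ins1 a B j ↔ ∃ i, a.succAbove i = j ∧ y ∈ B i := by
  rcases eq_or_ne j a with rfl | hne
  · rw [ins1_apply_same]
    simp only [Finset.mem_singleton]
    constructor
    · intro h
      exact absurd h (Fin.castSucc_lt_last y).ne
    · rintro ⟨i, hi, -⟩
      exact absurd hi (Fin.succAbove_ne _ i)
  · obtain ⟨i, rfl⟩ := Fin.exists_succAbove_eq hne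
    rw [ins1_apply_succAbove, mem_mS_castSucc]
    constructor
    · intro h
      exact ⟨i, rfl, h⟩
    · rintro ⟨i', hi', h⟩
      rwa [Fin.succAbove_right_inj.mp hi'] at h

lemma ins1_min_succAbove {n k : ℕ} {a : Fin (k+1)} {B : Fin k → Finset (Fin n)}
    {i : Fin k} {y : Fin n} :
    (ins1 a B (a.succAbove i)).min = ↑(Fin.castSucc y) ↔ (B i).min = ↑y := by
  rw [ins1_apply_succAbove, mS_min]

lemma ins1_min_same {n k : ℕ} {a : Fin (k+1)} {B : Fin k → Finset (Fin n)} {y : Fin n} :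
    ¬ (ins1 a B a).min = ↑(Fin.castSucc y) := by
  rw [ins1_apply_same, Finset.min_singleton]
  intro h
  have : Fin.last n = Fin.castSucc y := by exact_mod_cast h
  exact (Fin.castSucc_lt_last y).ne this.symm

/-! ### deletion maps -/

noncomputable def blkTop {n k : ℕ} (B : Fin (k+1) → Finset (Fin (n+1))) : Fin (k+1) :=
  if h : ∃ c, Fin.last n ∈ B c then h.choose else 0

lemma blkTop_spec {n k : ℕ} {B : Fin (k+1) → Finset (Fin (n+1))}
    (h : ∃ c, Fin.last n ∈ B c) : Fin.last n ∈ B (blkTop B) := by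
  rw [blkTop, dif_pos h]
  exact h.choose_spec

noncomputable def del2 {n k : ℕ} (B : Fin (k+1) → Finset (Fin (n+1))) :
    Fin (k+1) → Finset (Fin n) := fun j => delS (B j)

noncomputable def del1 {n k : ℕ} (B : Fin (k+1) → Finset (Fin (n+1))) :
    Fin k → Finset (Fin n) := fun i => delS (B ((blkTop B).succAbove i))

/-! ### OP membership and inverses -/

lemma ins2_mem_OP {n k : ℕ} (a : Fin (k+1)) {B : Fin (k+1) → Finset (Fin n)}
    (hB : B ∈ OP n (k+1)) : ins2 a B ∈ OP (n+1) (k+1) := by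
  obtain ⟨hne, hun⟩ := mem_OP.mp hB
  rw [mem_OP]
  constructor
  · intro j
    obtain ⟨y, hy⟩ := hne j
    exact ⟨_, ins2_castSucc_mem.mpr hy⟩
  · intro x
    induction x using Fin.lastCases with
    | last => exact ⟨a, ins2_last_mem.mpr rfl, fun j' hj' => ins2_last_mem.mp hj'⟩
    | cast y =>
      obtain ⟨j, hj, hu⟩ := hun y
      exact ⟨j, ins2_castSucc_mem.mpr hj, fun j' hj' => hu j' (ins2_castSucc_mem.mp hj')⟩

lemma ins2_not_sing {n k : ℕ} (a : Fin (k+1)) {B : Fin (k+1) → Finset (Fin n)}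
    (hB : B ∈ OP n (k+1)) : ¬ ∃ c, ins2 a B c = {Fin.last n} := by
  rintro ⟨c, hc⟩
  have hca : c = a := ins2_last_mem.mp (hc ▸ Finset.mem_singleton_self _)
  subst hca
  obtain ⟨y, hy⟩ := (mem_OP.mp hB).1 c
  have hm : Fin.castSucc y ∈ ins2 c B c := ins2_castSucc_mem.mpr hy
  rw [hc] at hm
  exact (Fin.castSucc_lt_last y).ne (Finset.mem_singleton.mp hm)

lemma blkTop_ins2 {n k : ℕ} (a : Fin (k+1)) (B : Fin (k+1) → Finset (Fin n)) :
    blkTop (ins2 a B) = a :=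
  ins2_last_mem.mp (blkTop_spec ⟨a, ins2_last_mem.mpr rfl⟩)

lemma del2_ins2 {n k : ℕ} (a : Fin (k+1)) (B : Fin (k+1) → Finset (Fin n)) :
    del2 (ins2 a B) = B := by
  funext j
  ext y
  rw [del2, mem_delS, ins2_castSucc_mem]

lemma del2_mem_OP {n k : ℕ} {B : Fin (k+1) → Finset (Fin (n+1))}
    (hB : B ∈ OP (n+1) (k+1)) (hns : ¬ ∃ c, B c = {Fin.last n}) : del2 B ∈ OP n (k+1) := by
  obtain ⟨hne, hun⟩ := mem_OP.mp hB
  have hex : ∃ c, Fin.last n ∈ B c := (hun (Fin.last n)).imp fun j hj => hj.1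
  have ht : Fin.last n ∈ B (blkTop B) := blkTop_spec hex
  have huniq_t : ∀ j, Fin.last n ∈ B j → j = blkTop B := by
    intro j hj
    obtain ⟨j0, _, hu⟩ := hun (Fin.last n)
    rw [hu j hj, hu _ ht]
  rw [mem_OP]
  constructor
  · intro j
    by_cases hjt : j = blkTop B
    · subst hjt
      have hBj : B (blkTop B) ≠ {Fin.last n} := fun hc => hns ⟨blkTop B, hc⟩
      have : ∃ x ∈ B (blkTop B), x ≠ Fin.last n := by
        by_contra hcon
        push_neg at hcon
        exact hBj (Finset.eq_singleton_iff_unique_mem.mpr ⟨ht, hcon⟩)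
      obtain ⟨x, hx, hxl⟩ := this
      obtain ⟨y, rfl⟩ := Fin.exists_castSucc_eq.mpr hxl
      exact ⟨y, mem_delS.mpr hx⟩
    · obtain ⟨x, hx⟩ := hne j
      have hxl : x ≠ Fin.last n := fun hc => hjt (huniq_t j (hc ▸ hx))
      obtain ⟨y, rfl⟩ := Fin.exists_castSucc_eq.mpr hxl
      exact ⟨y, mem_delS.mpr hx⟩
  · intro y
    obtain ⟨j, hj, hu⟩ := hun (Fin.castSucc y)
    exact ⟨j, mem_delS.mpr hj, fun j' hj' => hu j' (mem_delS.mp hj')⟩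

lemma ins2_del2 {n k : ℕ} {B : Fin (k+1) → Finset (Fin (n+1))}
    (hB : B ∈ OP (n+1) (k+1)) : ins2 (blkTop B) (del2 B) = B := by
  obtain ⟨hne, hun⟩ := mem_OP.mp hB
  have hex : ∃ c, Fin.last n ∈ B c := (hun (Fin.last n)).imp fun j hj => hj.1
  have ht : Fin.last n ∈ B (blkTop B) := blkTop_spec hex
  have huniq_t : ∀ j, Fin.last n ∈ B j → j = blkTop B := by
    intro j hj
    obtain ⟨j0, _, hu⟩ := hun (Fin.last n)
    rw [hu j hj, hu _ ht]
  funext j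
  ext x
  induction x using Fin.lastCases with
  | last =>
    rw [ins2_last_mem]
    constructor
    · rintro rfl; exact ht
    · exact huniq_t j
  | cast y =>
    rw [ins2_castSucc_mem, del2, mem_delS]

lemma ins1_mem_OP {n k : ℕ} (a : Fin (k+1)) {B : Fin k → Finset (Fin n)}
    (hB : B ∈ OP n k) : ins1 a B ∈ OP (n+1) (k+1) := by
  obtain ⟨hne, hun⟩ := mem_OP.mp hB
  rw [mem_OP]
  constructor
  · intro j
    rcases eq_or_ne j a with rfl | hja
    · rw [ins1_apply_same]
      exact ⟨Fin.last n, Finset.mem_singleton_self _⟩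
    · obtain ⟨i, rfl⟩ := Fin.exists_succAbove_eq hja
      rw [ins1_apply_succAbove]
      obtain ⟨y, hy⟩ := hne i
      exact ⟨_, mem_mS_castSucc.mpr hy⟩
  · intro x
    induction x using Fin.lastCases with
    | last => exact ⟨a, ins1_last_mem.mpr rfl, fun j' hj' => ins1_last_mem.mp hj'⟩
    | cast y =>
      obtain ⟨i0, hi0, hu⟩ := hun y
      refine ⟨a.succAbove i0, ins1_castSucc_mem.mpr ⟨i0, rfl, hi0⟩, ?_⟩
      intro j' hj'
      obtain ⟨i', hi', hyi'⟩ := ins1_castSucc_mem.mp hj'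
      rw [← hi', hu i' hyi']

lemma blkTop_ins1 {n k : ℕ} (a : Fin (k+1)) (B : Fin k → Finset (Fin n)) :
    blkTop (ins1 a B) = a :=
  ins1_last_mem.mp (blkTop_spec ⟨a, ins1_last_mem.mpr rfl⟩)

lemma del1_ins1 {n k : ℕ} (a : Fin (k+1)) (B : Fin k → Finset (Fin n)) :
    del1 (ins1 a B) = B := by
  funext i
  rw [del1, blkTop_ins1, ins1_apply_succAbove, delS_mS]

lemma del1_mem_OP {n k : ℕ} {B : Fin (k+1) → Finset (Fin (n+1))}
    (hB : B ∈ OP (n+1) (k+1)) (hs : ∃ c, B c = {Fin.last n}) : del1 B ∈ OP n k := by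
  obtain ⟨hne, hun⟩ := mem_OP.mp hB
  have hex : ∃ c, Fin.last n ∈ B c := (hun (Fin.last n)).imp fun j hj => hj.1
  have ht : Fin.last n ∈ B (blkTop B) := blkTop_spec hex
  have huniq_t : ∀ j, Fin.last n ∈ B j → j = blkTop B := by
    intro j hj
    obtain ⟨j0, _, hu⟩ := hun (Fin.last n)
    rw [hu j hj, hu _ ht]
  have hBt : B (blkTop B) = {Fin.last n} := by
    obtain ⟨c, hc⟩ := hs
    have := huniq_t c (hc ▸ Finset.mem_singleton_self _)
    rwa [← this]
  rw [mem_OP]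
  constructor
  · intro i
    obtain ⟨x, hx⟩ := hne ((blkTop B).succAbove i)
    have hxl : x ≠ Fin.last n := by
      intro hc
      exact Fin.succAbove_ne _ i (huniq_t _ (hc ▸ hx))
    obtain ⟨y, rfl⟩ := Fin.exists_castSucc_eq.mpr hxl
    exact ⟨y, mem_delS.mpr hx⟩
  · intro y
    obtain ⟨j, hj, hu⟩ := hun (Fin.castSucc y)
    have hjt : j ≠ blkTop B := by
      intro hc
      rw [hc, hBt] at hj
      exact (Fin.castSucc_lt_last y).ne (Finset.mem_singleton.mp hj)
    obtain ⟨i0, hi0⟩ := Fin.exists_succAbove_eq hjt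
    refine ⟨i0, mem_delS.mpr (by rw [hi0]; exact hj), ?_⟩
    intro i' hi'
    have : (blkTop B).succAbove i' = j := hu _ (mem_delS.mp hi')
    exact Fin.succAbove_right_inj.mp (this.trans hi0.symm)

lemma ins1_del1 {n k : ℕ} {B : Fin (k+1) → Finset (Fin (n+1))}
    (hB : B ∈ OP (n+1) (k+1)) (hs : ∃ c, B c = {Fin.last n}) :
    ins1 (blkTop B) (del1 B) = B := by
  obtain ⟨hne, hun⟩ := mem_OP.mp hB
  have hex : ∃ c, Fin.last n ∈ B c := (hun (Fin.last n)).imp fun j hj => hj.1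
  have ht : Fin.last n ∈ B (blkTop B) := blkTop_spec hex
  have huniq_t : ∀ j, Fin.last n ∈ B j → j = blkTop B := by
    intro j hj
    obtain ⟨j0, _, hu⟩ := hun (Fin.last n)
    rw [hu j hj, hu _ ht]
  have hBt : B (blkTop B) = {Fin.last n} := by
    obtain ⟨c, hc⟩ := hs
    have := huniq_t c (hc ▸ Finset.mem_singleton_self _)
    rwa [← this]
  funext j
  rcases eq_or_ne j (blkTop B) with rfl | hjt
  · rw [ins1_apply_same, hBt]
  · obtain ⟨i, rfl⟩ := Fin.exists_succAbove_eq hjt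
    rw [ins1_apply_succAbove, del1, mS_delS]
    intro hc
    exact Fin.succAbove_ne _ i (huniq_t _ hc)

/-! ### ros computations -/

lemma ros_ins2 {n k : ℕ} (a : Fin (k+1)) {B : Fin (k+1) → Finset (Fin n)}
    (hB : B ∈ OP n (k+1)) : ros (ins2 a B) = ros B + (k - a.val) := by
  classical
  obtain ⟨hne, hun⟩ := mem_OP.mp hB
  unfold ros
  rw [← Finset.card_filter_add_card_filter_not
      (p := fun ij : Fin (n+1) × Fin (n+1) => ij.1 = Fin.last n),
    Finset.filter_filter, Finset.filter_filter]
  have hnew : (Finset.filter (fun ij : Fin (n+1) × Fin (n+1) =>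
      (ij.2 < ij.1 ∧ ∃ c d, ij.1 ∈ ins2 a B c ∧ ij.2 ∈ ins2 a B d ∧
        (ins2 a B d).min = ↑ij.2 ∧ c < d) ∧ ij.1 = Fin.last n) Finset.univ).card
      = k - a.val := by
    have hbij : (Finset.Ioi a).card = (Finset.filter (fun ij : Fin (n+1) × Fin (n+1) =>
        (ij.2 < ij.1 ∧ ∃ c d, ij.1 ∈ ins2 a B c ∧ ij.2 ∈ ins2 a B d ∧
          (ins2 a B d).min = ↑ij.2 ∧ c < d) ∧ ij.1 = Fin.last n) Finset.univ).card := by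
      apply Finset.card_bij (fun d _ => (Fin.last n, Fin.castSucc ((B d).min' (hne d))))
      · intro d hd
        rw [Finset.mem_filter]
        exact ⟨Finset.mem_univ _, ⟨Fin.castSucc_lt_last _, a, d, ins2_last_mem.mpr rfl,
          ins2_castSucc_mem.mpr (Finset.min'_mem _ _),
          ins2_min.mpr (Finset.coe_min' (hne d)).symm, Finset.mem_Ioi.mp hd⟩, rfl⟩
      · intro d1 h1 d2 h2 heq
        have h3 : (B d1).min' (hne d1) = (B d2).min' (hne d2) :=
          Fin.castSucc_injective n (congrArg Prod.snd heq)
        obtain ⟨j0, _, hu⟩ := hun ((B d1).min' (hne d1))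
        rw [hu d1 (Finset.min'_mem _ _), hu d2 (by rw [h3]; exact Finset.min'_mem _ _)]
      · rintro ⟨x1, x2⟩ hij
        rw [Finset.mem_filter] at hij
        obtain ⟨-, ⟨hlt, c, d, h1, h2, h3, hcd⟩, heq⟩ := hij
        simp only at heq h1 h2 h3 hlt
        subst heq
        have hca : c = a := ins2_last_mem.mp h1
        have h2l : x2 ≠ Fin.last n := hlt.ne
        obtain ⟨y2, hy2⟩ := Fin.exists_castSucc_eq.mpr h2l
        rw [← hy2] at h2 h3
        have hmin : (B d).min = ↑y2 := ins2_min.mp h3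
        have hm' : (B d).min' (hne d) = y2 := by
          have hc := Finset.coe_min' (hne d)
          rw [hmin] at hc
          exact_mod_cast hc
        refine ⟨d, Finset.mem_Ioi.mpr (hca ▸ hcd), ?_⟩
        rw [hm', hy2]
    rw [← hbij, Fin.card_Ioi]
    omega
  have hold : ros B = (Finset.filter (fun ij : Fin (n+1) × Fin (n+1) =>
      (ij.2 < ij.1 ∧ ∃ c d, ij.1 ∈ ins2 a B c ∧ ij.2 ∈ ins2 a B d ∧
        (ins2 a B d).min = ↑ij.2 ∧ c < d) ∧ ¬ ij.1 = Fin.last n) Finset.univ).card := by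
    unfold ros
    apply Finset.card_bij (fun p _ => (Fin.castSucc p.1, Fin.castSucc p.2))
    · intro p hp
      rw [Finset.mem_filter] at hp
      obtain ⟨-, hlt, c, d, h1, h2, h3, hcd⟩ := hp
      exact Finset.mem_filter.mpr ⟨Finset.mem_univ _,
        ⟨Fin.castSucc_lt_castSucc_iff.mpr hlt, c, d, ins2_castSucc_mem.mpr h1,
          ins2_castSucc_mem.mpr h2, ins2_min.mpr h3, hcd⟩,
        (Fin.castSucc_lt_last p.1).ne⟩
    · intro p hp q hq heq
      exact Prod.ext_iff.mpr ⟨Fin.castSucc_injective n (congrArg Prod.fst heq),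
        Fin.castSucc_injective n (congrArg Prod.snd heq)⟩
    · rintro ⟨x1, x2⟩ hij
      rw [Finset.mem_filter] at hij
      obtain ⟨-, ⟨hlt, c, d, h1, h2, h3, hcd⟩, hne1⟩ := hij
      simp only at hne1 h1 h2 h3 hlt
      obtain ⟨y1, hy1⟩ := Fin.exists_castSucc_eq.mpr hne1
      have hne2 : x2 ≠ Fin.last n := by
        intro hc
        rw [hc] at hlt
        exact absurd hlt (not_lt.mpr (Fin.le_last x1))
      obtain ⟨y2, hy2⟩ := Fin.exists_castSucc_eq.mpr hne2
      rw [← hy1] at h1 hlt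
      rw [← hy2] at h2 h3 hlt
      refine ⟨(y1, y2), Finset.mem_filter.mpr ⟨Finset.mem_univ _,
        Fin.castSucc_lt_castSucc_iff.mp hlt, c, d, ins2_castSucc_mem.mp h1,
        ins2_castSucc_mem.mp h2, ins2_min.mp h3, hcd⟩, ?_⟩
      rw [hy1, hy2]
  rw [hnew, ← hold, Nat.add_comm]
  rfl

lemma ros_ins1 {n k : ℕ} (a : Fin (k+1)) {B : Fin k → Finset (Fin n)}
    (hB : B ∈ OP n k) : ros (ins1 a B) = ros B + (k - a.val) := by
  classical
  obtain ⟨hne, hun⟩ := mem_OP.mp hB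
  unfold ros
  rw [← Finset.card_filter_add_card_filter_not
      (p := fun ij : Fin (n+1) × Fin (n+1) => ij.1 = Fin.last n),
    Finset.filter_filter, Finset.filter_filter]
  have hnew : (Finset.filter (fun ij : Fin (n+1) × Fin (n+1) =>
      (ij.2 < ij.1 ∧ ∃ c d, ij.1 ∈ ins1 a B c ∧ ij.2 ∈ ins1 a B d ∧
        (ins1 a B d).min = ↑ij.2 ∧ c < d) ∧ ij.1 = Fin.last n) Finset.univ).card
      = k - a.val := by
    have hbij : (Finset.filter (fun i : Fin k => a < a.succAbove i) Finset.univ).card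
        = (Finset.filter (fun ij : Fin (n+1) × Fin (n+1) =>
        (ij.2 < ij.1 ∧ ∃ c d, ij.1 ∈ ins1 a B c ∧ ij.2 ∈ ins1 a B d ∧
          (ins1 a B d).min = ↑ij.2 ∧ c < d) ∧ ij.1 = Fin.last n) Finset.univ).card := by
      apply Finset.card_bij (fun i _ => (Fin.last n, Fin.castSucc ((B i).min' (hne i))))
      · intro i hi
        rw [Finset.mem_filter]
        exact ⟨Finset.mem_univ _, ⟨Fin.castSucc_lt_last _, a, a.succAbove i,
          ins1_last_mem.mpr rfl, ins1_castSucc_mem.mpr ⟨i, rfl, Finset.min'_mem _ _⟩,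
          ins1_min_succAbove.mpr (Finset.coe_min' (hne i)).symm,
          (Finset.mem_filter.mp hi).2⟩, rfl⟩
      · intro i1 h1 i2 h2 heq
        have h3 : (B i1).min' (hne i1) = (B i2).min' (hne i2) :=
          Fin.castSucc_injective n (congrArg Prod.snd heq)
        obtain ⟨j0, _, hu⟩ := hun ((B i1).min' (hne i1))
        rw [hu i1 (Finset.min'_mem _ _), hu i2 (by rw [h3]; exact Finset.min'_mem _ _)]
      · rintro ⟨x1, x2⟩ hij
        rw [Finset.mem_filter] at hij
        obtain ⟨-, ⟨hlt, c, d, h1, h2, h3, hcd⟩, heq⟩ := hij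
        simp only at heq h1 h2 h3 hlt
        subst heq
        have hca : c = a := ins1_last_mem.mp h1
        have h2l : x2 ≠ Fin.last n := hlt.ne
        obtain ⟨y2, hy2⟩ := Fin.exists_castSucc_eq.mpr h2l
        rw [← hy2] at h2 h3
        obtain ⟨i, hid, hyi⟩ := ins1_castSucc_mem.mp h2
        rw [← hid] at h3 hcd
        have hmin : (B i).min = ↑y2 := ins1_min_succAbove.mp h3
        have hm' : (B i).min' (hne i) = y2 := by
          have hc := Finset.coe_min' (hne i)
          rw [hmin] at hc
          exact_mod_cast hc
        refine ⟨i, Finset.mem_filter.mpr ⟨Finset.mem_univ _, hca ▸ hcd⟩, ?_⟩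
        rw [hm', hy2]
    have hcnt : (Finset.filter (fun i : Fin k => a < a.succAbove i) Finset.univ).card
        = (Finset.Ioi a).card := by
      apply Finset.card_bij (fun i _ => a.succAbove i)
      · intro i hi
        exact Finset.mem_Ioi.mpr (Finset.mem_filter.mp hi).2
      · intro i1 _ i2 _ heq
        exact Fin.succAbove_right_injective heq
      · intro b hb
        obtain ⟨i, hi⟩ := Fin.exists_succAbove_eq (Finset.mem_Ioi.mp hb).ne'
        exact ⟨i, Finset.mem_filter.mpr ⟨Finset.mem_univ _,
          by rw [hi]; exact Finset.mem_Ioi.mp hb⟩, hi⟩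
    rw [← hbij, hcnt, Fin.card_Ioi]
    omega
  have hold : ros B = (Finset.filter (fun ij : Fin (n+1) × Fin (n+1) =>
      (ij.2 < ij.1 ∧ ∃ c d, ij.1 ∈ ins1 a B c ∧ ij.2 ∈ ins1 a B d ∧
        (ins1 a B d).min = ↑ij.2 ∧ c < d) ∧ ¬ ij.1 = Fin.last n) Finset.univ).card := by
    unfold ros
    apply Finset.card_bij (fun p _ => (Fin.castSucc p.1, Fin.castSucc p.2))
    · intro p hp
      rw [Finset.mem_filter] at hp
      obtain ⟨-, hlt, c, d, h1, h2, h3, hcd⟩ := hp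
      exact Finset.mem_filter.mpr ⟨Finset.mem_univ _,
        ⟨Fin.castSucc_lt_castSucc_iff.mpr hlt, a.succAbove c, a.succAbove d,
          ins1_castSucc_mem.mpr ⟨c, rfl, h1⟩, ins1_castSucc_mem.mpr ⟨d, rfl, h2⟩,
          ins1_min_succAbove.mpr h3, Fin.succAbove_lt_succAbove_iff.mpr hcd⟩,
        (Fin.castSucc_lt_last p.1).ne⟩
    · intro p hp q hq heq
      exact Prod.ext_iff.mpr ⟨Fin.castSucc_injective n (congrArg Prod.fst heq),
        Fin.castSucc_injective n (congrArg Prod.snd heq)⟩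
    · rintro ⟨x1, x2⟩ hij
      rw [Finset.mem_filter] at hij
      obtain ⟨-, ⟨hlt, c, d, h1, h2, h3, hcd⟩, hne1⟩ := hij
      simp only at hne1 h1 h2 h3 hlt
      obtain ⟨y1, hy1⟩ := Fin.exists_castSucc_eq.mpr hne1
      have hne2 : x2 ≠ Fin.last n := by
        intro hc
        rw [hc] at hlt
        exact absurd hlt (not_lt.mpr (Fin.le_last x1))
      obtain ⟨y2, hy2⟩ := Fin.exists_castSucc_eq.mpr hne2
      rw [← hy1] at h1 hlt
      rw [← hy2] at h2 h3 hlt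
      obtain ⟨i1, hi1, hyi1⟩ := ins1_castSucc_mem.mp h1
      obtain ⟨i2, hi2, hyi2⟩ := ins1_castSucc_mem.mp h2
      rw [← hi2] at h3 hcd
      rw [← hi1] at hcd
      refine ⟨(y1, y2), Finset.mem_filter.mpr ⟨Finset.mem_univ _,
        Fin.castSucc_lt_castSucc_iff.mp hlt, i1, i2, hyi1, hyi2,
        ins1_min_succAbove.mp h3, Fin.succAbove_lt_succAbove_iff.mp hcd⟩, ?_⟩
      rw [hy1, hy2]
  rw [hnew, ← hold, Nat.add_comm]
  rfl

/-! ### assembly -/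

lemma sum_OP_rec (n k : ℕ) :
    ∑ B ∈ OP (n+1) (k+1), qq ^ ros B =
      qint (k+1) * ((∑ B ∈ OP n (k+1), qq ^ ros B) + ∑ B ∈ OP n k, qq ^ ros B) := by
  classical
  rw [← Finset.sum_filter_add_sum_filter_not (OP (n+1) (k+1))
      (fun B => ∃ c, B c = {Fin.last n}) (fun B => qq ^ ros B)]
  have hq : qint (k+1) = ∑ a : Fin (k+1), qq ^ (k - a.val) := by
    rw [qint, ← Finset.sum_range_reflect (fun j => qq ^ j) (k+1),
      Fin.sum_univ_eq_sum_range (fun i => qq ^ (k - i)) (k+1)]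
    apply Finset.sum_congr rfl
    intro j hj
    congr 1
  have h1 : ∑ B ∈ (OP (n+1) (k+1)).filter (fun B => ∃ c, B c = {Fin.last n}), qq ^ ros B
      = ∑ p ∈ (Finset.univ : Finset (Fin (k+1))) ×ˢ OP n k,
          qq ^ (ros p.2 + (k - p.1.val)) := by
    apply Finset.sum_nbij' (fun B => (blkTop B, del1 B)) (fun p => ins1 p.1 p.2)
    · intro B hB
      rw [Finset.mem_filter] at hB
      exact Finset.mem_product.mpr ⟨Finset.mem_univ _, del1_mem_OP hB.1 hB.2⟩
    · intro p hp
      rw [Finset.mem_product] at hp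
      exact Finset.mem_filter.mpr ⟨ins1_mem_OP p.1 hp.2, p.1, ins1_apply_same _ _⟩
    · intro B hB
      rw [Finset.mem_filter] at hB
      exact ins1_del1 hB.1 hB.2
    · intro p hp
      rw [Finset.mem_product] at hp
      exact Prod.ext_iff.mpr ⟨blkTop_ins1 p.1 p.2, by rw [del1_ins1]⟩
    · intro B hB
      rw [Finset.mem_filter] at hB
      conv_lhs => rw [← ins1_del1 hB.1 hB.2]
      rw [ros_ins1 _ (del1_mem_OP hB.1 hB.2)]
  have h2 : ∑ B ∈ (OP (n+1) (k+1)).filter (fun B => ¬ ∃ c, B c = {Fin.last n}), qq ^ ros B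
      = ∑ p ∈ (Finset.univ : Finset (Fin (k+1))) ×ˢ OP n (k+1),
          qq ^ (ros p.2 + (k - p.1.val)) := by
    apply Finset.sum_nbij' (fun B => (blkTop B, del2 B)) (fun p => ins2 p.1 p.2)
    · intro B hB
      rw [Finset.mem_filter] at hB
      exact Finset.mem_product.mpr ⟨Finset.mem_univ _, del2_mem_OP hB.1 hB.2⟩
    · intro p hp
      rw [Finset.mem_product] at hp
      exact Finset.mem_filter.mpr ⟨ins2_mem_OP p.1 hp.2, ins2_not_sing p.1 hp.2⟩
    · intro B hB
      rw [Finset.mem_filter] at hB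
      exact ins2_del2 hB.1
    · intro p hp
      rw [Finset.mem_product] at hp
      exact Prod.ext_iff.mpr ⟨blkTop_ins2 p.1 p.2, by rw [del2_ins2]⟩
    · intro B hB
      rw [Finset.mem_filter] at hB
      conv_lhs => rw [← ins2_del2 hB.1]
      rw [ros_ins2 _ (del2_mem_OP hB.1 hB.2)]
  rw [h1, h2, Finset.sum_product, Finset.sum_product, hq, Finset.sum_mul,
    ← Finset.sum_add_distrib]
  apply Finset.sum_congr rfl
  intro a _
  simp only [pow_add, ← Finset.sum_mul]
  ring

lemma OP_succ_zero (n : ℕ) : OP (n+1) 0 = ∅ := by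
  rw [Finset.eq_empty_iff_forall_notMem]
  intro B hB
  obtain ⟨j, -, -⟩ := (mem_OP.mp hB).2 0
  exact j.elim0

lemma OP_zero_succ (k : ℕ) : OP 0 (k+1) = ∅ := by
  rw [Finset.eq_empty_iff_forall_notMem]
  intro B hB
  obtain ⟨x, hx⟩ := (mem_OP.mp hB).1 0
  exact x.elim0

lemma sum_OP_zero_zero : ∑ B ∈ OP 0 0, qq ^ ros B = 1 := by
  have huniv : OP 0 0 = Finset.univ :=
    Finset.eq_univ_of_forall fun B => mem_OP.mpr ⟨fun j => j.elim0, fun x => x.elim0⟩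
  haveI : Subsingleton (Fin 0 → Finset (Fin 0)) := ⟨fun a b => funext fun i => i.elim0⟩
  have hr : ∀ B : Fin 0 → Finset (Fin 0), ros B = 0 := by
    intro B
    unfold ros
    rw [Finset.univ_eq_empty, Finset.filter_empty, Finset.card_empty]
  rw [huniv, Fintype.sum_subsingleton (fun B : Fin 0 → Finset (Fin 0) => qq ^ ros B)
    (fun _ => ∅), hr, pow_zero]

lemma G_F : ∀ n k : ℕ, qq ^ (Nat.choose k 2) * (∑ B ∈ OP n k, qq ^ ros B) = Fq n k := by
  intro n
  induction n with
  | zero =>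
    intro k
    cases k with
    | zero =>
      rw [sum_OP_zero_zero, Fq_zero_right]
      simp
    | succ k => rw [OP_zero_succ, Finset.sum_empty, mul_zero, Fq_zero_left]
  | succ n ih =>
    intro k
    cases k with
    | zero =>
      rw [OP_succ_zero, Finset.sum_empty, mul_zero, Fq_zero_right]
      simp
    | succ k =>
      rw [sum_OP_rec, Fq_rec n k, ← ih (k+1), ← ih k, choose_succ_two, pow_add]
      ring

theorem sum_ROS_eq (n k : ℕ) (hkn : k ≤ n) :
    ∑ B ∈ OP n k, qq ^ (ros B + Nat.choose k 2) = qfac k * qStirling n k := by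
  rw [qStirling_eq hkn, ← G_F n k, Finset.mul_sum]
  apply Finset.sum_congr rfl
  intro B _
  rw [← pow_add, Nat.add_comm]
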